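/- arXiv:1610.04826 — 2 statements merged into one kernel-verified Lean document; each statement's English description precedes it below -/
import Mathlib

section
/- For every integer n ≥ 2, the von Mangoldt function satisfies Λ(n)/log n = Σ_{k=1}^{⌊log₂ n⌋} (1/k)(−1)^{k+1} f_k(n), where f_k(n) = f_k(n,2); equivalently Λ(n) = (log n) · Σ_{k=1}^{⌊log₂ n⌋} (1/k)(−1)^{k+1} f_k(n). -/
open Finset

/-- `f k n l` is the number of ordered `k`-tuples `(i₁, …, i_k)` of integers
with each `i_j ≥ l` and `i₁ ⋯ i_k = n`.  (For `n ≥ 1` and `l ≥ 1` every such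
factor lies in `[l, n]`, and for `k = 0` this gives `1` if `n = 1` and `0` otherwise.) -/
def f (k n l : ℕ) : ℕ :=
  ((Fintype.piFinset fun _ : Fin k => Finset.Icc l n).filter
    fun v => ∏ i, v i = n).card

/-- `F k x l = ∑_{n ≤ x} f k n l`; it equals `0` for `x < 1` and `F 0 x l = 1` for `x ≥ 1`. -/
noncomputable def F (k : ℕ) (x : ℝ) (l : ℕ) : ℕ :=
  ∑ n ∈ Finset.Icc 1 ⌊x⌋₊, f k n l


def Sfin (k n : ℕ) : Finset (Fin k → ℕ) :=
  (Fintype.piFinset fun _ : Fin k => Finset.Icc 2 n).filter fun v => ∏ i, v i = n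

lemma f_eq_card (k n : ℕ) : f k n 2 = (Sfin k n).card := rfl

lemma mem_Sfin {k n : ℕ} (hn : 1 ≤ n) {v : Fin k → ℕ} :
    v ∈ Sfin k n ↔ (∀ i, 2 ≤ v i) ∧ ∏ i, v i = n := by
  simp only [Sfin, Finset.mem_filter, Fintype.mem_piFinset, Finset.mem_Icc]
  constructor
  · rintro ⟨h1, h2⟩; exact ⟨fun i => (h1 i).1, h2⟩
  · rintro ⟨h1, h2⟩
    refine ⟨fun i => ⟨h1 i, ?_⟩, h2⟩
    have : v i ∣ n := h2 ▸ Finset.dvd_prod_of_mem v (Finset.mem_univ i)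
    exact Nat.le_of_dvd hn this

lemma f_zero (n : ℕ) : (f 0 n 2 : ℝ) = if n = 1 then 1 else 0 := by
  have : (Fintype.piFinset fun _ : Fin 0 => Finset.Icc 2 n) = Finset.univ := by
    ext v; simp [Fintype.mem_piFinset]
  rw [f, this]
  have h2 : ∀ v : Fin 0 → ℕ, (∏ i, v i) = 1 := fun v => by simp
  rcases eq_or_ne n 1 with h | h <;> simp [h2, Finset.filter_const, h, eq_comm,
    Finset.card_univ]

lemma f_apply_zero (k : ℕ) : f k 0 2 = 0 := by
  cases k with
  | zero => have := f_zero 0; norm_num at this; exact_mod_cast this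
  | succ k =>
    rw [f, Finset.card_eq_zero, Finset.eq_empty_iff_forall_notMem]
    intro v hv
    simp only [Finset.mem_filter, Fintype.mem_piFinset, Finset.mem_Icc] at hv
    have := hv.1 0
    omega

lemma f_eq_zero_of_lt {k n : ℕ} (h : n < 2 ^ k) : f k n 2 = 0 := by
  rw [f, Finset.card_eq_zero, Finset.eq_empty_iff_forall_notMem]
  intro v hv
  simp only [Finset.mem_filter, Fintype.mem_piFinset, Finset.mem_Icc] at hv
  have h2 : (2 : ℕ) ^ k ≤ ∏ i, v i := by
    calc (2:ℕ)^k = ∏ _i : Fin k, 2 := by simp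
    _ ≤ ∏ i, v i := Finset.prod_le_prod' fun i _ => (hv.1 i).1
  omega

lemma split (k n : ℕ) (hn : 1 ≤ n) (w : ℕ → ℝ) :
    ∑ v ∈ Sfin (k+1) n, w (v 0) =
      ∑ d ∈ n.divisors.filter (2 ≤ ·), w d * (f k (n / d) 2 : ℝ) := by
  have hRHS : ∀ d, w d * (f k (n/d) 2 : ℝ) = ∑ _u ∈ Sfin k (n/d), w d := by
    intro d
    rw [f_eq_card, Finset.sum_const, nsmul_eq_mul, mul_comm]
  rw [Finset.sum_congr rfl fun d _ => hRHS d, Finset.sum_sigma']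
  refine Finset.sum_bij' (fun v _ => (⟨v 0, Fin.tail v⟩ : Σ _d : ℕ, (Fin k → ℕ)))
    (fun x _ => Fin.cons x.1 x.2) ?_ ?_ ?_ ?_ ?_
  · intro v hv
    rw [mem_Sfin hn] at hv
    obtain ⟨h2, hprod⟩ := hv
    have hprod' : v 0 * ∏ i : Fin k, Fin.tail v i = n := by
      rw [← hprod, Fin.prod_univ_succ]; rfl
    have hdvd : v 0 ∣ n := ⟨_, hprod'.symm⟩
    have htail : ∏ i : Fin k, Fin.tail v i = n / v 0 :=
      (Nat.div_eq_of_eq_mul_left (show 0 < v 0 by have := h2 0; omega)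
        (by rw [← hprod', mul_comm])).symm
    have hpos : 1 ≤ n / v 0 := by
      rw [← htail]
      have : 0 < ∏ i : Fin k, Fin.tail v i := by
        refine Finset.prod_pos ?_
        intro i _
        have := h2 i.succ
        simp only [Fin.tail]
        omega
      omega
    rw [Finset.mem_sigma]
    constructor
    · simp only [Finset.mem_filter, Nat.mem_divisors]
      exact ⟨⟨hdvd, by omega⟩, h2 0⟩
    · exact (mem_Sfin hpos).2 ⟨fun i => h2 i.succ, htail⟩
  · rintro ⟨d, u⟩ hx
    rw [Finset.mem_sigma, Finset.mem_filter, Nat.mem_divisors] at hx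
    obtain ⟨⟨⟨hdvd, hn0⟩, hd2⟩, hu⟩ := hx
    have hd2' : 2 ≤ d := hd2
    have hpos : 1 ≤ n / d := Nat.div_pos (Nat.le_of_dvd hn hdvd) (by omega)
    rw [mem_Sfin hpos] at hu
    refine (mem_Sfin hn).2 ⟨?_, ?_⟩
    · intro i
      refine Fin.cases ?_ ?_ i
      · simpa using hd2
      · intro j; simpa using hu.1 j
    · rw [Fin.prod_univ_succ]
      simp only [Fin.cons_zero, Fin.cons_succ]
      rw [show (∏ i : Fin k, u i) = n / d from hu.2]
      exact Nat.mul_div_cancel' hdvd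
  · intro v _; exact Fin.cons_self_tail v
  · rintro ⟨d, u⟩ _
    simp [Fin.tail_cons]
  · intro v _; rfl

namespace Stmt9Aux
open ArithmeticFunction

noncomputable def A : ArithmeticFunction ℝ :=
  ⟨fun n => if 2 ≤ n then 1 else 0, by norm_num⟩

noncomputable def LA : ArithmeticFunction ℝ :=
  ⟨fun n => if 2 ≤ n then Real.log n else 0, by norm_num⟩

lemma A_apply (n : ℕ) : A n = if 2 ≤ n then 1 else 0 := rfl
lemma LA_apply (n : ℕ) : LA n = if 2 ≤ n then Real.log n else 0 := rfl

lemma f_zero' (n : ℕ) : (f 0 n 2 : ℝ) = if n = 1 then 1 else 0 := f_zero n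

lemma A_pow_apply (k n : ℕ) : (A ^ k) n = (f k n 2 : ℝ) := by
  induction k generalizing n with
  | zero =>
    rw [pow_zero, ArithmeticFunction.one_apply, f_zero']
  | succ k ih =>
    rw [pow_succ, mul_comm, ArithmeticFunction.mul_apply]
    rcases Nat.eq_zero_or_pos n with rfl | hn
    · simp [f_apply_zero]
    · rw [Nat.sum_divisorsAntidiagonal fun a b => A a * (A ^ k) b]
      have : ∀ d ∈ n.divisors, A d * (A ^ k) (n / d)
          = (if 2 ≤ d then (1:ℝ) else 0) * (f k (n / d) 2 : ℝ) := by
        intro d _; rw [A_apply, ih]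
      rw [Finset.sum_congr rfl this]
      have hsplit := split k n hn (fun _ => (1:ℝ))
      have hcard : ∑ v ∈ Sfin (k+1) n, (1:ℝ) = (f (k+1) n 2 : ℝ) := by
        rw [Finset.sum_const, f_eq_card]; simp
      rw [hcard] at hsplit
      rw [hsplit]
      rw [Finset.sum_filter]
      exact Finset.sum_congr rfl fun d _ => by split <;> simp

lemma sum_coord_eq (k n : ℕ) (hn : 1 ≤ n) (i0 : Fin (k+1)) :
    ∑ v ∈ Sfin (k+1) n, Real.log (v i0) = ∑ v ∈ Sfin (k+1) n, Real.log (v 0) := by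
  refine Finset.sum_nbij' (fun v => v ∘ Equiv.swap 0 i0) (fun v => v ∘ Equiv.swap 0 i0)
    ?_ ?_ ?_ ?_ ?_
  · intro v hv
    rw [mem_Sfin hn] at hv ⊢
    exact ⟨fun j => hv.1 _, by
      show ∏ i : Fin (k+1), v (Equiv.swap 0 i0 i) = n
      rw [Equiv.prod_comp (Equiv.swap 0 i0) v]; exact hv.2⟩
  · intro v hv
    rw [mem_Sfin hn] at hv ⊢
    exact ⟨fun j => hv.1 _, by
      show ∏ i : Fin (k+1), v (Equiv.swap 0 i0 i) = n
      rw [Equiv.prod_comp (Equiv.swap 0 i0) v]; exact hv.2⟩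
  · intro v _; funext j; simp [Equiv.swap_apply_self]
  · intro v _; funext j; simp [Equiv.swap_apply_self]
  · intro v _
    simp [Equiv.swap_apply_left]

lemma deriv (k n : ℕ) (hn : 1 ≤ n) :
    Real.log n * (f (k+1) n 2 : ℝ) =
      ((k:ℝ)+1) * ∑ d ∈ n.divisors.filter (2 ≤ ·), Real.log d * (f k (n/d) 2 : ℝ) := by
  have h1 : Real.log n * (f (k+1) n 2 : ℝ) = ∑ v ∈ Sfin (k+1) n, Real.log n := by
    rw [Finset.sum_const, f_eq_card, nsmul_eq_mul, mul_comm]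
  have h2 : ∀ v ∈ Sfin (k+1) n, Real.log n = ∑ i : Fin (k+1), Real.log (v i) := by
    intro v hv
    rw [mem_Sfin hn] at hv
    rw [← hv.2]
    push_cast
    rw [Real.log_prod]
    intro i _
    have := hv.1 i
    positivity
  rw [h1, Finset.sum_congr rfl h2, Finset.sum_comm]
  have h3 : ∀ i : Fin (k+1), ∑ v ∈ Sfin (k+1) n, Real.log (v i)
      = ∑ d ∈ n.divisors.filter (2 ≤ ·), Real.log d * (f k (n/d) 2 : ℝ) := by
    intro i
    rw [sum_coord_eq _ n hn i]
    exact split k n hn fun m => Real.log m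
  rw [Finset.sum_congr rfl fun i _ => h3 i, Finset.sum_const]
  simp [Finset.card_univ, mul_comm]

lemma LA_mul_pow (j n : ℕ) :
    (LA * A ^ j) n = ∑ d ∈ n.divisors.filter (2 ≤ ·), Real.log d * (f j (n/d) 2 : ℝ) := by
  rw [ArithmeticFunction.mul_apply,
    Nat.sum_divisorsAntidiagonal fun a b => LA a * (A ^ j) b, Finset.sum_filter]
  refine Finset.sum_congr rfl fun d _ => ?_
  rw [LA_apply, A_pow_apply]
  split <;> simp

lemma sum_divisors_Y (Y : ArithmeticFunction ℝ) (n : ℕ) (hn : 1 ≤ n) :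
    ∑ d ∈ n.divisors, Y d = Y n + (Y * A) n := by
  rw [ArithmeticFunction.mul_apply, Nat.sum_divisorsAntidiagonal fun a b => Y a * A b]
  have key : ∀ d ∈ n.divisors, Y d = (if d = n then Y d else 0) + Y d * A (n/d) := by
    intro d hd
    rw [Nat.mem_divisors] at hd
    rcases eq_or_ne d n with rfl | hne
    · have : d / d = 1 := Nat.div_self (Nat.pos_of_dvd_of_pos hd.1 hn)
      simp [A_apply, this]
    · have hdvd := hd.1
      have hdpos : 0 < d := Nat.pos_of_dvd_of_pos hdvd hn
      have hlt : d < n := lt_of_le_of_ne (Nat.le_of_dvd hn hdvd) hne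
      have hmul : n / d * d = n := Nat.div_mul_cancel hdvd
      have hne1 : n / d ≠ 1 := by
        intro h; rw [h, one_mul] at hmul; omega
      have h0 : 0 < n / d := Nat.div_pos (le_of_lt hlt) hdpos
      have hq : 2 ≤ n / d := by omega
      simp [A_apply, hq, hne]
  rw [Finset.sum_congr rfl key, Finset.sum_add_distrib, Finset.sum_ite_eq' n.divisors n]
  rw [if_pos (Nat.mem_divisors_self n (by omega))]

lemma C2 (k n : ℕ) (hn : 1 ≤ n) :
    ∑ d ∈ n.divisors, Real.log d * (f (k+1) d 2 : ℝ)
      = ((k:ℝ)+1) * ((LA * A ^ k) n + (LA * A ^ (k+1)) n) := by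
  have key : ∀ d ∈ n.divisors, Real.log d * (f (k+1) d 2 : ℝ)
      = ((k:ℝ)+1) * (LA * A ^ k) d := by
    intro d hd
    rw [Nat.mem_divisors] at hd
    have hd1 : 1 ≤ d := Nat.pos_of_dvd_of_pos hd.1 (by omega)
    rw [deriv k d hd1, LA_mul_pow]
  rw [Finset.sum_congr rfl key, ← Finset.mul_sum, sum_divisors_Y (LA * A ^ k) n hn,
    mul_assoc, ← pow_succ]

lemma telescope (b : ℕ → ℝ) (K : ℕ) :
    ∑ k ∈ Finset.Icc 1 K, (-1:ℝ)^(k+1) * (b (k-1) + b k)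
      = b 0 + (-1:ℝ)^(K+1) * b K := by
  induction K with
  | zero => simp
  | succ K ih =>
    rw [Finset.sum_Icc_succ_top (by omega : 1 ≤ K + 1), ih]
    have h1 : K + 1 - 1 = K := rfl
    rw [h1, pow_succ (-1:ℝ) (K+1)]
    ring

lemma LA_eq_log (n : ℕ) (hn : 1 ≤ n) : LA n = Real.log n := by
  rw [LA_apply]
  rcases Nat.lt_or_ge n 2 with h | h
  · have : n = 1 := by omega
    simp [this]
  · simp [h]

lemma bK_zero (n : ℕ) (hn : 1 ≤ n) : (LA * A ^ (Nat.log 2 n)) n = 0 := by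
  rw [LA_mul_pow]
  refine Finset.sum_eq_zero fun d hd => ?_
  rw [Finset.mem_filter, Nat.mem_divisors] at hd
  obtain ⟨⟨hdvd, hn0⟩, hd2⟩ := hd
  have h1 : n < 2 ^ (Nat.log 2 n + 1) := Nat.lt_pow_succ_log_self one_lt_two n
  have h2 : n / d ≤ n / 2 := Nat.div_le_div_left hd2 (by norm_num)
  have h3 : n / 2 < 2 ^ Nat.log 2 n := by
    rw [Nat.div_lt_iff_lt_mul (by norm_num : 0 < 2)]
    calc n < 2 ^ (Nat.log 2 n + 1) := h1
    _ = 2 ^ Nat.log 2 n * 2 := by rw [pow_succ]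
  rw [f_eq_zero_of_lt (by omega), Nat.cast_zero, mul_zero]

lemma M (n : ℕ) (hn : 1 ≤ n) :
    ∑ d ∈ n.divisors, (Real.log d *
      ∑ k ∈ Finset.Icc 1 (Nat.log 2 n), (1/(k:ℝ)) * (-1:ℝ)^(k+1) * (f k d 2 : ℝ))
      = Real.log n := by
  set K := Nat.log 2 n with hK
  have swap : ∑ d ∈ n.divisors, (Real.log d *
      ∑ k ∈ Finset.Icc 1 K, (1/(k:ℝ)) * (-1:ℝ)^(k+1) * (f k d 2 : ℝ))
      = ∑ k ∈ Finset.Icc 1 K, ∑ d ∈ n.divisors,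
        (1/(k:ℝ)) * (-1:ℝ)^(k+1) * (Real.log d * (f k d 2 : ℝ)) := by
    simp_rw [Finset.mul_sum]
    rw [Finset.sum_comm]
    exact Finset.sum_congr rfl fun k _ => Finset.sum_congr rfl fun d _ => by ring
  rw [swap]
  have step : ∀ k ∈ Finset.Icc 1 K, ∑ d ∈ n.divisors,
      (1/(k:ℝ)) * (-1:ℝ)^(k+1) * (Real.log d * (f k d 2 : ℝ))
      = (-1:ℝ)^(k+1) * ((LA * A ^ (k-1)) n + (LA * A ^ k) n) := by
    intro k hk
    rw [Finset.mem_Icc] at hk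
    obtain ⟨j, rfl⟩ : ∃ j, k = j + 1 := ⟨k - 1, by omega⟩
    rw [← Finset.mul_sum, C2 j n hn]
    have hj1 : (1 / ((j:ℝ)+1)) * (((j:ℝ)+1)) = 1 := by
      rw [one_div, inv_mul_cancel₀]; positivity
    have h2 : (j + 1 - 1) = j := rfl
    rw [h2]
    push_cast
    field_simp
  rw [Finset.sum_congr rfl step, telescope (fun j => (LA * A ^ j) n) K]
  simp only [hK]
  rw [bK_zero n hn, mul_zero, add_zero, pow_zero, mul_one, LA_eq_log n hn]

noncomputable def D (m : ℕ) : ℝ :=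
  Real.log m *
    ∑ k ∈ Finset.Icc 1 (Nat.log 2 m), (1 / (k : ℝ)) * (-1 : ℝ) ^ (k + 1) * (f k m 2 : ℝ)

lemma sum_indep (m K : ℕ) (hm : 1 ≤ m) (hK : Nat.log 2 m ≤ K) :
    ∑ k ∈ Finset.Icc 1 K, (1/(k:ℝ)) * (-1:ℝ)^(k+1) * (f k m 2 : ℝ)
      = ∑ k ∈ Finset.Icc 1 (Nat.log 2 m), (1/(k:ℝ)) * (-1:ℝ)^(k+1) * (f k m 2 : ℝ) := by
  refine (Finset.sum_subset (Finset.Icc_subset_Icc_right hK) fun k hk hk' => ?_).symm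
  rw [Finset.mem_Icc] at hk hk'
  have hklog : Nat.log 2 m < k := by omega
  have : m < 2 ^ k := by
    calc m < 2 ^ (Nat.log 2 m + 1) := Nat.lt_pow_succ_log_self one_lt_two m
    _ ≤ 2 ^ k := Nat.pow_le_pow_right (by norm_num) (by omega)
  rw [f_eq_zero_of_lt this, Nat.cast_zero, mul_zero]

lemma sum_D (n : ℕ) (hn : 1 ≤ n) : ∑ d ∈ n.divisors, D d = Real.log n := by
  rw [← M n hn]
  refine Finset.sum_congr rfl fun d hd => ?_
  rw [Nat.mem_divisors] at hd
  have hd1 : 1 ≤ d := Nat.pos_of_dvd_of_pos hd.1 (by omega)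
  have hdn : d ≤ n := Nat.le_of_dvd (by omega) hd.1
  rw [D, sum_indep d (Nat.log 2 n) hd1 (Nat.log_mono_right hdn)]

lemma D_eq (n : ℕ) : D n = ArithmeticFunction.vonMangoldt n := by
  induction n using Nat.strong_induction_on with
  | _ n ih =>
    rcases Nat.eq_zero_or_pos n with rfl | hn
    · simp [D]
    · have h1 := sum_D n hn
      have h2 : ∑ d ∈ n.divisors, ArithmeticFunction.vonMangoldt d = Real.log n :=
        ArithmeticFunction.vonMangoldt_sum
      rw [← Nat.cons_self_properDivisors (by omega : n ≠ 0), Finset.sum_cons] at h1 h2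
      have h3 : ∑ d ∈ n.properDivisors, D d
          = ∑ d ∈ n.properDivisors, ArithmeticFunction.vonMangoldt d :=
        Finset.sum_congr rfl fun d hd => ih d (Nat.mem_properDivisors.1 hd).2
      linarith

end Stmt9Aux


theorem stmt9 (n : ℕ) (hn : 2 ≤ n) :
    ArithmeticFunction.vonMangoldt n =
      Real.log n *
        ∑ k ∈ Finset.Icc 1 (Nat.log 2 n),
          (1 / (k : ℝ)) * (-1 : ℝ) ^ (k + 1) * (f k n 2 : ℝ) := (Stmt9Aux.D_eq n).symm
end

section
/- For every real x ≥ 1 and every integer k ≥ 0, D_k(x) = Σ_{i=0}^{⌊log₂ x⌋} C(k,i) F_i(x), where D_k(x) = F_k(x,1) and F_i(x) = F_i(x,2). -/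
open Finset

lemma f_eq_zero (i n : ℕ) (h : n < 2 ^ i) : f i n 2 = 0 := by
  rw [f, Finset.card_eq_zero, Finset.filter_eq_empty_iff]
  intro v hv hprod
  rw [Fintype.mem_piFinset] at hv
  have h2 : 2 ^ i ≤ ∏ j, v j := by
    calc 2 ^ i = ∏ _j : Fin i, 2 := by simp
    _ ≤ ∏ j, v j := Finset.prod_le_prod' fun j _ => (Finset.mem_Icc.mp (hv j)).1
  omega

lemma fiber_card (k n : ℕ) (hn : 1 ≤ n) (S : Finset (Fin k)) :
    ((((Fintype.piFinset fun _ : Fin k => Finset.Icc 1 n).filter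
        fun v => ∏ i, v i = n)).filter
      fun v => univ.filter (fun j => 2 ≤ v j) = S).card = f S.card n 2 := by
  classical
  rw [f]
  set e := S.equivFin with he
  clear_value e
  refine Finset.card_nbij' (fun v => fun j : Fin S.card => v (e.symm j))
    (fun w => fun a : Fin k => if h : a ∈ S then w (e ⟨a, h⟩) else 1) ?_ ?_ ?_ ?_
  · intro v hv
    simp only [Finset.mem_coe, Finset.mem_filter, Fintype.mem_piFinset] at hv ⊢
    obtain ⟨⟨hv1, hv2⟩, hv3⟩ := hv
    have hmem : ∀ a : Fin k, a ∈ S ↔ 2 ≤ v a := by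
      intro a
      rw [← hv3]; simp
    refine ⟨fun j => ?_, ?_⟩
    · have ha : ((e.symm j : S) : Fin k) ∈ S := (e.symm j).2
      exact Finset.mem_Icc.mpr ⟨(hmem _).mp ha, (Finset.mem_Icc.mp (hv1 _)).2⟩
    · calc ∏ j : Fin S.card, v (e.symm j)
          = ∏ s : S, v s := Equiv.prod_comp e.symm (fun s : S => v s)
      _ = ∏ a ∈ S, v a := Finset.prod_coe_sort S v
      _ = ∏ a, v a := by
            refine Finset.prod_subset (Finset.subset_univ S) ?_
            intro a _ ha
            have h1 := (Finset.mem_Icc.mp (hv1 a)).1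
            have h2 := (hmem a).not.mp ha
            omega
      _ = n := hv2
  · intro w hw
    simp only [Finset.mem_coe, Finset.mem_filter, Fintype.mem_piFinset] at hw ⊢
    obtain ⟨hw1, hw2⟩ := hw
    have hval : ∀ a : Fin k, (if h : a ∈ S then w (e ⟨a, h⟩) else 1) ∈ Finset.Icc 1 n := by
      intro a
      split
      · next h =>
        have := Finset.mem_Icc.mp (hw1 (e ⟨a, h⟩))
        exact Finset.mem_Icc.mpr ⟨by omega, this.2⟩
      · exact Finset.mem_Icc.mpr ⟨le_refl 1, hn⟩
    have hprod : (∏ a, if h : a ∈ S then w (e ⟨a, h⟩) else 1) = n := by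
      calc (∏ a, if h : a ∈ S then w (e ⟨a, h⟩) else 1)
          = ∏ a ∈ S, (if h : a ∈ S then w (e ⟨a, h⟩) else 1) := by
            refine (Finset.prod_subset (Finset.subset_univ S) ?_).symm
            intro a _ ha; simp [ha]
      _ = ∏ s ∈ S.attach, (if h : (s : Fin k) ∈ S then w (e ⟨s, h⟩) else 1) :=
            (Finset.prod_attach S _).symm
      _ = ∏ s ∈ S.attach, w (e s) := by
            refine Finset.prod_congr rfl fun s _ => ?_
            rw [dif_pos s.2]
      _ = ∏ s : S, w (e s) := by rw [Finset.attach_eq_univ]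
      _ = ∏ j : Fin S.card, w j := Equiv.prod_comp e w
      _ = n := hw2
    refine ⟨⟨hval, hprod⟩, ?_⟩
    ext a
    simp only [Finset.mem_filter, Finset.mem_univ, true_and]
    constructor
    · intro h2a
      by_contra ha
      rw [dif_neg ha] at h2a
      omega
    · intro ha
      rw [dif_pos ha]
      exact (Finset.mem_Icc.mp (hw1 (e ⟨a, ha⟩))).1
  · intro v hv
    simp only [Finset.mem_coe, Finset.mem_filter, Fintype.mem_piFinset] at hv
    obtain ⟨⟨hv1, hv2⟩, hv3⟩ := hv
    funext a
    dsimp only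
    by_cases ha : a ∈ S
    · rw [dif_pos ha]
      show v (e.symm (e ⟨a, ha⟩)) = v a
      rw [e.symm_apply_apply]
    · rw [dif_neg ha]
      have h2a : ¬ 2 ≤ v a := by
        intro h2a
        exact ha (hv3 ▸ Finset.mem_filter.mpr ⟨Finset.mem_univ a, h2a⟩)
      have := (Finset.mem_Icc.mp (hv1 a)).1
      omega
  · intro w hw
    funext j
    have hmem : ((e.symm j : S) : Fin k) ∈ S := (e.symm j).2
    show (if h : ((e.symm j : S) : Fin k) ∈ S then w (e ⟨_, h⟩) else 1) = w j
    rw [dif_pos hmem]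
    congr 1
    calc e ⟨((e.symm j : S) : Fin k), hmem⟩ = e (e.symm j) := by congr 1
    _ = j := e.apply_symm_apply j

lemma f_split (k n : ℕ) (hn : 1 ≤ n) :
    f k n 1 = ∑ i ∈ Finset.range (k + 1), k.choose i * f i n 2 := by
  classical
  have h3 : f k n 1 = ∑ S : Finset (Fin k), f S.card n 2 := by
    rw [f]
    rw [Finset.card_eq_sum_card_fiberwise
      (f := fun v : Fin k → ℕ => univ.filter (fun j => 2 ≤ v j))
      (fun v _ => Finset.mem_univ _)]
    exact Finset.sum_congr rfl fun S _ => fiber_card k n hn S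
  rw [h3]
  rw [← Finset.sum_fiberwise_of_maps_to (g := fun S : Finset (Fin k) => S.card)
    (t := Finset.range (k + 1)) (fun S _ => Finset.mem_range.mpr
      (Nat.lt_succ_of_le (by simpa using Finset.card_le_card (Finset.subset_univ S))))]
  refine Finset.sum_congr rfl fun i hi => ?_
  have hfix : ∀ S ∈ Finset.univ.filter (fun S : Finset (Fin k) => S.card = i),
      f S.card n 2 = f i n 2 := by
    intro S hS
    rw [(Finset.mem_filter.mp hS).2]
  rw [Finset.sum_congr rfl hfix, Finset.sum_const, smul_eq_mul]
  congr 1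
  have : Finset.univ.filter (fun S : Finset (Fin k) => S.card = i)
      = Finset.powersetCard i (Finset.univ : Finset (Fin k)) := by
    rw [Finset.powersetCard_eq_filter, Finset.powerset_univ]
  rw [this, Finset.card_powersetCard]
  simp

theorem stmt14 (x : ℝ) (hx : 1 ≤ x) (k : ℕ) :
    F k x 1 =
      ∑ i ∈ Finset.range (⌊Real.logb 2 x⌋₊ + 1), Nat.choose k i * F i x 2 := by
  classical
  set L := ⌊Real.logb 2 x⌋₊ with hL
  have hxpow : x < 2 ^ (L + 1) := by
    have h1 : Real.logb 2 x < (L + 1 : ℕ) := by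
      push_cast
      exact Nat.lt_floor_add_one _
    have := (Real.logb_lt_iff_lt_rpow (by norm_num) (by linarith)).mp h1
    rwa [Real.rpow_natCast] at this
  have hFzero : ∀ i, L + 1 ≤ i → F i x 2 = 0 := by
    intro i hi
    rw [F]
    apply Finset.sum_eq_zero
    intro n hn
    apply f_eq_zero
    have hn2 : (n : ℝ) ≤ x := by
      have := (Finset.mem_Icc.mp hn).2
      exact le_trans (Nat.cast_le.mpr this) (Nat.floor_le (by linarith))
    have : (n : ℝ) < 2 ^ i := by
      calc (n : ℝ) ≤ x := hn2
      _ < 2 ^ (L + 1) := hxpow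
      _ ≤ 2 ^ i := by
          apply pow_le_pow_right₀ (by norm_num) hi
    exact_mod_cast this
  have h1 : F k x 1 = ∑ i ∈ Finset.range (k + 1), k.choose i * F i x 2 := by
    rw [F]
    have : ∀ n ∈ Finset.Icc 1 ⌊x⌋₊,
        f k n 1 = ∑ i ∈ Finset.range (k + 1), k.choose i * f i n 2 := by
      intro n hn
      exact f_split k n (Finset.mem_Icc.mp hn).1
    rw [Finset.sum_congr rfl this, Finset.sum_comm]
    refine Finset.sum_congr rfl fun i _ => ?_
    rw [F, Finset.mul_sum]
  -- extend both sums to range (max k L + 1)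
  set N := max k L + 1 with hN
  have hsum : ∀ (m : ℕ), m + 1 ≤ N →
      (∀ i, m + 1 ≤ i → k.choose i * F i x 2 = 0) →
      ∑ i ∈ Finset.range (m + 1), k.choose i * F i x 2
        = ∑ i ∈ Finset.range N, k.choose i * F i x 2 := by
    intro m hm hz
    refine Finset.sum_subset (Finset.range_subset_range.mpr hm) ?_
    intro i _ hi
    exact hz i (by simpa using Finset.mem_range.not.mp hi)
  rw [h1, hsum k (by omega) (fun i hi => by rw [Nat.choose_eq_zero_of_lt (by omega)]; ring),
    ← hsum L (by omega) (fun i hi => by rw [hFzero i hi]; ring)]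
end
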